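/- Let G be a connected P5-free chordal bipartite graph with bipartition (A,B), |A| = |B| + 1, maximum biclique (A1,B1), and NNO orderings A2 = (u_1,...,u_p), B2 = (v_1,...,v_q). If deg(u_g) ≥ g for all 1 ≤ g ≤ p and deg(v_h) > h for all 1 ≤ h ≤ q, then G has a Hamiltonian path. -/

import Mathlib

open SimpleGraph Finset

variable {V : Type*}

/-- `(A, B)` is a bipartition of the graph `G`. -/
def IsBipartitionOf (G : SimpleGraph V) (A B : Finset V) : Prop :=
  Disjoint A B ∧ (∀ v : V, v ∈ A ∨ v ∈ B) ∧
    ∀ ⦃x y : V⦄, G.Adj x y → (x ∈ A ∧ y ∈ B) ∨ (x ∈ B ∧ y ∈ A)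

/-- `G` has no induced path on `n` vertices. -/
def PFree (n : ℕ) (G : SimpleGraph V) : Prop :=
  ∀ f : Fin n → V, Function.Injective f →
    ¬ (∀ i j : Fin n, G.Adj (f i) (f j) ↔ ((i : ℕ) + 1 = (j : ℕ) ∨ (j : ℕ) + 1 = (i : ℕ)))

/-- Every cycle of length at least 6 has a chord. -/
def ChordalBipartite (G : SimpleGraph V) : Prop :=
  ∀ (v : V) (c : G.Walk v v), c.IsCycle → 6 ≤ c.length →
    ∃ x y : V, x ∈ c.support ∧ y ∈ c.support ∧ G.Adj x y ∧ s(x, y) ∉ c.edges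

/-- `(A1, B1)` is a maximal biclique of `G` within the bipartition `(A, B)`:
it is a complete bipartite subgraph and no vertex can be added to either side. -/
def IsMaximalBiclique (G : SimpleGraph V) (A B A1 B1 : Finset V) : Prop :=
  A1 ⊆ A ∧ B1 ⊆ B ∧ (∀ x ∈ A1, ∀ y ∈ B1, G.Adj x y) ∧
    (∀ x ∈ A, (∀ y ∈ B1, G.Adj x y) → x ∈ A1) ∧
    (∀ y ∈ B, (∀ x ∈ A1, G.Adj x y) → y ∈ B1)

lemma getElem_idx_congr {α : Type*} {l : List α} {i j : ℕ} {hi : i < l.length}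
    {hj : j < l.length} (h : i = j) : l[i] = l[j] := by subst h; rfl

/-- Interleave two lists. -/
def ilv : List α → List α → List α
  | [], l => l
  | a :: as, l => a :: ilv l as
termination_by xs ys => xs.length + ys.length

lemma ilv_nil (l : List α) : ilv [] l = l := by simp [ilv]

lemma ilv_cons (a : α) (as l : List α) : ilv (a :: as) l = a :: ilv l as := by simp [ilv]

lemma ilv_perm : ∀ xs ys : List α, (ilv xs ys).Perm (xs ++ ys)
  | [], l => by simp [ilv]
  | a :: as, l => by
      rw [ilv_cons]
      exact ((ilv_perm l as).trans List.perm_append_comm).cons a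
termination_by xs ys => xs.length + ys.length

lemma chain'_ilv (R : α → α → Prop) : ∀ (xs ys : List α),
    (xs.length = ys.length ∨ xs.length = ys.length + 1) →
    (∀ i (h1 : i < xs.length) (h2 : i < ys.length), R xs[i] ys[i]) →
    (∀ i (h2 : i < ys.length) (h1 : i + 1 < xs.length), R ys[i] xs[i+1]) →
    (ilv xs ys).Chain' R
  | [], ys => by
      intro hlen _ _
      cases ys with
      | nil => simp [ilv, List.Chain']
      | cons y ys => simp at hlen
  | x :: xs, ys => by
      intro hlen h1 h2
      rw [ilv_cons]
      cases ys with
      | nil =>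
          have hx : xs = [] := by
            rcases hlen with h | h <;> simp_all
          subst hx; simp [ilv, List.Chain']
      | cons y ys' =>
          rw [ilv_cons]
          apply List.isChain_cons.mpr
          constructor
          · intro z hz
            simp only [List.head?_cons, Option.mem_def, Option.some.injEq] at hz
            subst hz
            exact h1 0 (by simp) (by simp)
          · rw [← ilv_cons]
            apply chain'_ilv R (y :: ys') xs
            · simp at hlen ⊢; omega
            · intro i hi1 hi2
              have := h2 i hi1 (by simp; omega)
              simpa using this
            · intro i hi2 hi1
              have := h1 (i+1) (by simpa using hi2) hi1
              simpa using this
termination_by xs ys => xs.length + ys.length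

lemma ord [DecidableEq α] : ∀ (n : ℕ) (S : Finset α) (C : Fin n → Finset α),
    (∀ i, C i ⊆ S) → (∀ i j : Fin n, i ≤ j → C i ⊆ C j) →
    (∀ i : Fin n, (i : ℕ) + 1 ≤ (C i).card) →
    ∃ L : List α, L.Nodup ∧ L.toFinset = S ∧
      ∀ (i : ℕ) (hi : i < n), ∃ h' : i < L.length, L[i] ∈ C ⟨i, hi⟩ := by
  intro n
  induction n with
  | zero =>
      intro S C _ _ _
      exact ⟨S.toList, S.nodup_toList, by simp, fun i hi => absurd hi (by omega)⟩
  | succ n ih =>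
      intro S C hsub hmono hcard
      obtain ⟨x, hx⟩ : (C 0).Nonempty := Finset.card_pos.mp (by have := hcard 0; omega)
      obtain ⟨L', h1, h2, h3⟩ := ih (S.erase x) (fun j => (C j.succ).erase x)
        (fun j => Finset.erase_subset_erase x (hsub _))
        (fun i j hij => Finset.erase_subset_erase x (hmono _ _ (by simpa using hij)))
        (fun i => by
          have h4 := hcard i.succ
          have h5 := Finset.pred_card_le_card_erase (s := C i.succ) (a := x)
          simp only [Fin.val_succ] at h4
          show (i : ℕ) + 1 ≤ ((C i.succ).erase x).card
          omega)
      have hxL' : x ∉ L' := by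
        intro hmem
        have : x ∈ S.erase x := by rw [← h2]; exact List.mem_toFinset.mpr hmem
        simp at this
      refine ⟨x :: L', List.nodup_cons.mpr ⟨hxL', h1⟩, ?_, ?_⟩
      · simp only [List.toFinset_cons, h2]
        exact Finset.insert_erase (hsub 0 hx)
      · intro i hi
        cases i with
        | zero => exact ⟨by simp, hx⟩
        | succ k =>
            obtain ⟨hk, hmem⟩ := h3 k (by omega)
            refine ⟨by simpa using Nat.succ_lt_succ hk, ?_⟩
            simp only [List.getElem_cons_succ]
            exact Finset.mem_of_mem_erase hmem

lemma walk_of_chain {G : SimpleGraph V} : ∀ (l : List V), l ≠ [] → l.Chain' G.Adj →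
    ∃ (a b : V) (w : G.Walk a b), w.support = l := by
  intro l
  induction l with
  | nil => intro h; exact absurd rfl h
  | cons x l ih =>
      intro _ hc
      cases l with
      | nil => exact ⟨x, x, SimpleGraph.Walk.nil, by simp⟩
      | cons y l' =>
          obtain ⟨a, b, w, hw⟩ := ih (by simp) (List.isChain_cons_cons.mp hc).2
          have ha : a = y := by
            have := w.support_eq_cons
            rw [hw] at this
            exact (List.cons.injEq _ _ _ _ ▸ this).1.symm
          subst ha
          exact ⟨x, b, SimpleGraph.Walk.cons (List.isChain_cons_cons.mp hc).1 w, by simp [hw]⟩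

lemma p5_helper {G : SimpleGraph V} (hp5 : PFree 5 G) (x0 x1 x2 x3 x4 : V)
    (d01 : x0 ≠ x1) (d02 : x0 ≠ x2) (d03 : x0 ≠ x3) (d04 : x0 ≠ x4)
    (d12 : x1 ≠ x2) (d13 : x1 ≠ x3) (d14 : x1 ≠ x4)
    (d23 : x2 ≠ x3) (d24 : x2 ≠ x4) (d34 : x3 ≠ x4)
    (e01 : G.Adj x0 x1) (e12 : G.Adj x1 x2) (e23 : G.Adj x2 x3) (e34 : G.Adj x3 x4)
    (n02 : ¬ G.Adj x0 x2) (n03 : ¬ G.Adj x0 x3) (n04 : ¬ G.Adj x0 x4)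
    (n13 : ¬ G.Adj x1 x3) (n14 : ¬ G.Adj x1 x4) (n24 : ¬ G.Adj x2 x4) : False := by
  apply hp5 ![x0, x1, x2, x3, x4]
  · intro i j hij
    fin_cases i <;> fin_cases j <;> simp_all
  · intro i j
    fin_cases i <;> fin_cases j <;>
      simp only [Matrix.cons_val_zero, Matrix.cons_val_one, Matrix.head_cons,
        Matrix.cons_val_two, Matrix.tail_cons, Matrix.cons_val_three, Matrix.cons_val_four,
        Fin.isValue, Fin.val_zero, Fin.val_one, Fin.val_two] <;>
      norm_num <;>
      first
        | exact G.loopless _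
        | assumption
        | exact e01.symm
        | exact e12.symm
        | exact e23.symm
        | exact e34.symm
        | exact fun h => n02 h.symm
        | exact fun h => n03 h.symm
        | exact fun h => n04 h.symm
        | exact fun h => n13 h.symm
        | exact fun h => n14 h.symm
        | exact fun h => n24 h.symm

theorem stmt11 [Fintype V] [DecidableEq V] (G : SimpleGraph V) [DecidableRel G.Adj]
    (A B A1 B1 : Finset V) {p q : ℕ} (u : Fin p → V) (v : Fin q → V)
    (hconn : G.Connected) (hbip : IsBipartitionOf G A B)
    (hcb : ChordalBipartite G) (hp5 : PFree 5 G)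
    (hmax : IsMaximalBiclique G A B A1 B1)
    -- `u` enumerates `A \ A1` in non-decreasing degree order (NNO)
    (hu : Function.Injective u) (huA : ∀ i, u i ∈ A \ A1)
    (huAll : ∀ x ∈ A \ A1, ∃ i, u i = x)
    (humono : ∀ i j : Fin p, i ≤ j → G.degree (u i) ≤ G.degree (u j))
    -- `v` enumerates `B \ B1` in non-decreasing degree order (NNO)
    (hv : Function.Injective v) (hvB : ∀ j, v j ∈ B \ B1)
    (hvAll : ∀ y ∈ B \ B1, ∃ j, v j = y)
    (hvmono : ∀ i j : Fin q, i ≤ j → G.degree (v i) ≤ G.degree (v j))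
    (hcard : A.card = B.card + 1)
    (hdu : ∀ g : Fin p, (g : ℕ) + 1 ≤ G.degree (u g))
    (hdv : ∀ h : Fin q, (h : ℕ) + 1 < G.degree (v h)) :
    ∃ (a b : V) (w : G.Walk a b), w.IsHamiltonian := by
  obtain ⟨hAB, hmem, hadj⟩ := hbip
  obtain ⟨hA1A, hB1B, hbic, hmaxA, hmaxB⟩ := hmax
  have noadjA : ∀ {x y : V}, x ∈ A → y ∈ A → ¬ G.Adj x y := by
    intro x y hx hy hxy
    rcases hadj hxy with ⟨_, h⟩ | ⟨h, _⟩
    · exact Finset.disjoint_left.mp hAB hy h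
    · exact Finset.disjoint_left.mp hAB hx h
  have noadjB : ∀ {x y : V}, x ∈ B → y ∈ B → ¬ G.Adj x y := by
    intro x y hx hy hxy
    rcases hadj hxy with ⟨h, _⟩ | ⟨_, h⟩
    · exact Finset.disjoint_left.mp hAB h hx
    · exact Finset.disjoint_left.mp hAB h hy
  have neAB : ∀ {x y : V}, x ∈ A → y ∈ B → x ≠ y := by
    intro x y hx hy h
    exact Finset.disjoint_left.mp hAB hx (h ▸ hy)
  have nbrB : ∀ {x : V}, x ∈ A → G.neighborFinset x ⊆ B := by
    intro x hx y hy
    rw [SimpleGraph.mem_neighborFinset] at hy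
    rcases hadj hy with ⟨_, h⟩ | ⟨h, _⟩
    · exact h
    · exact absurd hx (Finset.disjoint_right.mp hAB h)
  have nbrA : ∀ {x : V}, x ∈ B → G.neighborFinset x ⊆ A := by
    intro x hx y hy
    rw [SimpleGraph.mem_neighborFinset] at hy
    rcases hadj hy with ⟨h, _⟩ | ⟨_, h⟩
    · exact absurd hx (Finset.disjoint_left.mp hAB h)
    · exact h
  have degB : ∀ {x : V}, x ∈ A → G.degree x ≤ B.card := by
    intro x hx
    rw [← SimpleGraph.card_neighborFinset_eq_degree]
    exact Finset.card_le_card (nbrB hx)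
  have degA : ∀ {x : V}, x ∈ B → G.degree x ≤ A.card := by
    intro x hx
    rw [← SimpleGraph.card_neighborFinset_eq_degree]
    exact Finset.card_le_card (nbrA hx)
  -- cardinalities
  have himgu : Finset.univ.image u = A \ A1 := by
    apply Finset.Subset.antisymm
    · intro x hx
      simp only [Finset.mem_image] at hx
      obtain ⟨i, _, rfl⟩ := hx
      exact huA i
    · intro x hx
      obtain ⟨i, rfl⟩ := huAll x hx
      exact Finset.mem_image.mpr ⟨i, Finset.mem_univ _, rfl⟩
  have himgv : Finset.univ.image v = B \ B1 := by
    apply Finset.Subset.antisymm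
    · intro x hx
      simp only [Finset.mem_image] at hx
      obtain ⟨i, _, rfl⟩ := hx
      exact hvB i
    · intro x hx
      obtain ⟨i, rfl⟩ := hvAll x hx
      exact Finset.mem_image.mpr ⟨i, Finset.mem_univ _, rfl⟩
  have hpcard : (A \ A1).card = p := by
    rw [← himgu, Finset.card_image_of_injective _ hu]; simp
  have hqcard : (B \ B1).card = q := by
    rw [← himgv, Finset.card_image_of_injective _ hv]; simp
  have hcardA : (A \ A1).card + A1.card = A.card := Finset.card_sdiff_add_card_eq_card hA1A
  have hcardB : (B \ B1).card + B1.card = B.card := Finset.card_sdiff_add_card_eq_card hB1B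
  -- trivial case : B empty
  rcases Nat.eq_zero_or_pos B.card with hB0 | hBpos
  · have hB : B = ∅ := Finset.card_eq_zero.mp hB0
    obtain ⟨a0, ha0⟩ := Finset.card_eq_one.mp (by omega : A.card = 1)
    have hall : ∀ x : V, x = a0 := by
      intro x
      rcases hmem x with hx | hx
      · rw [ha0] at hx; simpa using hx
      · rw [hB] at hx; simp at hx
    refine ⟨a0, a0, SimpleGraph.Walk.nil, ?_⟩
    intro x
    rw [hall x]
    simp
  -- A1 and B1 nonempty
  have hA1ne : A1.Nonempty := by
    rw [Finset.nonempty_iff_ne_empty]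
    intro hA1e
    have hAA1 : A \ A1 = A := by rw [hA1e]; simp
    have hpA : p = A.card := by rw [← hpcard, hAA1]
    have hppos : 0 < p := by omega
    have hlast := hdu ⟨p - 1, by omega⟩
    have hdle := degB (Finset.mem_sdiff.mp (huA ⟨p - 1, by omega⟩)).1
    simp only at hlast
    omega
  have hB1ne : B1.Nonempty := by
    rw [Finset.nonempty_iff_ne_empty]
    intro hB1e
    have hA1eq : A1 = A := by
      apply Finset.Subset.antisymm hA1A
      intro x hx
      exact hmaxA x hx (by intro y hy; rw [hB1e] at hy; simp at hy)
    have hqB : q = B.card := by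
      rw [← hqcard, hB1e]; simp
    have hqpos : 0 < q := by omega
    set j : Fin q := ⟨q - 1, by omega⟩ with hj
    have hlast := hdv j
    have hjB : v j ∈ B := (Finset.mem_sdiff.mp (hvB j)).1
    have hdeg := degA hjB
    have hNeq : G.neighborFinset (v j) = A := by
      apply Finset.eq_of_subset_of_card_le (nbrA hjB)
      rw [SimpleGraph.card_neighborFinset_eq_degree]
      simp only [hj] at hlast
      omega
    have : v j ∈ B1 := by
      apply hmaxB _ hjB
      intro x hx
      have hxA : x ∈ G.neighborFinset (v j) := by rw [hNeq]; exact hA1A hx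
      rw [SimpleGraph.mem_neighborFinset] at hxA
      exact hxA.symm
    rw [hB1e] at this
    simp at this
  -- non-neighbors from maximality
  have existsNonNbrB1 : ∀ x ∈ A \ A1, ∃ y ∈ B1, ¬ G.Adj x y := by
    intro x hx
    by_contra hcon
    push_neg at hcon
    exact (Finset.mem_sdiff.mp hx).2
      (hmaxA x (Finset.mem_sdiff.mp hx).1 (fun y hy => hcon y hy))
  have existsNonNbrA1 : ∀ y ∈ B \ B1, ∃ a ∈ A1, ¬ G.Adj a y := by
    intro y hy
    by_contra hcon
    push_neg at hcon
    exact (Finset.mem_sdiff.mp hy).2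
      (hmaxB y (Finset.mem_sdiff.mp hy).1 (fun x hx => hcon x hx))
  -- no edges between A2 and B2 : P5 arguments
  have key1 : ∀ u' w', u' ∈ A \ A1 → w' ∈ B \ B1 → G.Adj u' w' → ∀ b ∈ B1, ¬ G.Adj u' b := by
    intro u' w' hu' hw' huw b hb hub
    obtain ⟨a, ha1, haw⟩ := existsNonNbrA1 w' hw'
    obtain ⟨y, hy1, huy⟩ := existsNonNbrB1 u' hu'
    have hu'A : u' ∈ A := (Finset.mem_sdiff.mp hu').1
    have hu'nA1 : u' ∉ A1 := (Finset.mem_sdiff.mp hu').2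
    have hw'B : w' ∈ B := (Finset.mem_sdiff.mp hw').1
    have hw'nB1 : w' ∉ B1 := (Finset.mem_sdiff.mp hw').2
    have haA := hA1A ha1
    have hbB := hB1B hb
    have hyB := hB1B hy1
    exact p5_helper hp5 w' u' b a y
      (neAB hu'A hw'B).symm (fun h => hw'nB1 (h ▸ hb)) (neAB haA hw'B).symm
      (fun h => hw'nB1 (h ▸ hy1)) (neAB hu'A hbB) (fun h => hu'nA1 (h ▸ ha1))
      (neAB hu'A hyB) (neAB haA hbB).symm (fun h => huy (h ▸ hub)) (neAB haA hyB)
      huw.symm hub (hbic a ha1 b hb).symm (hbic a ha1 y hy1)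
      (noadjB hw'B hbB) (fun h => haw h.symm) (noadjB hw'B hyB)
      (noadjA hu'A haA) huy (noadjB hbB hyB)
  have key2 : ∀ u' w', u' ∈ A \ A1 → w' ∈ B \ B1 → G.Adj u' w' → ∀ a' ∈ A1, ¬ G.Adj w' a' := by
    intro u' w' hu' hw' huw a' ha' hwa
    obtain ⟨a, ha1, haw⟩ := existsNonNbrA1 w' hw'
    obtain ⟨y, hy1⟩ := hB1ne
    have hnoB1 := key1 u' w' hu' hw' huw
    have hu'A : u' ∈ A := (Finset.mem_sdiff.mp hu').1
    have hu'nA1 : u' ∉ A1 := (Finset.mem_sdiff.mp hu').2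
    have hw'B : w' ∈ B := (Finset.mem_sdiff.mp hw').1
    have hw'nB1 : w' ∉ B1 := (Finset.mem_sdiff.mp hw').2
    have haA := hA1A ha1
    have ha'A := hA1A ha'
    have hyB := hB1B hy1
    exact p5_helper hp5 u' w' a' y a
      (neAB hu'A hw'B) (fun h => hu'nA1 (h ▸ ha')) (neAB hu'A hyB)
      (fun h => hu'nA1 (h ▸ ha1)) (neAB ha'A hw'B).symm (fun h => hw'nB1 (h ▸ hy1))
      (neAB haA hw'B).symm (neAB ha'A hyB) (fun h => haw (h ▸ hwa).symm) (neAB haA hyB).symm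
      huw hwa (hbic a' ha' y hy1) (hbic a ha1 y hy1).symm
      (noadjA hu'A ha'A) (hnoB1 y hy1) (noadjA hu'A haA)
      (noadjB hw'B hyB) (fun h => haw h.symm) (noadjA ha'A haA)
  have hclose : ∀ x y, G.Adj x y →
      ((x ∈ A \ A1 ∧ ∀ b ∈ B1, ¬ G.Adj x b) ∨ (x ∈ B \ B1 ∧ ∀ a ∈ A1, ¬ G.Adj x a)) →
      ((y ∈ A \ A1 ∧ ∀ b ∈ B1, ¬ G.Adj y b) ∨ (y ∈ B \ B1 ∧ ∀ a ∈ A1, ¬ G.Adj y a)) := by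
    intro x y hxy hQx
    rcases hQx with ⟨hxA2, hxno⟩ | ⟨hxB2, hxno⟩
    · have hyB : y ∈ B := nbrB (Finset.mem_sdiff.mp hxA2).1
        ((SimpleGraph.mem_neighborFinset _ _ _).mpr hxy)
      have hyB2 : y ∈ B \ B1 := Finset.mem_sdiff.mpr ⟨hyB, fun hy1 => hxno y hy1 hxy⟩
      exact Or.inr ⟨hyB2, key2 x y hxA2 hyB2 hxy⟩
    · have hyA : y ∈ A := nbrA (Finset.mem_sdiff.mp hxB2).1
        ((SimpleGraph.mem_neighborFinset _ _ _).mpr hxy)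
      have hyA2 : y ∈ A \ A1 := Finset.mem_sdiff.mpr ⟨hyA, fun hy1 => hxno y hy1 hxy⟩
      exact Or.inl ⟨hyA2, key1 y x hyA2 hxB2 hxy.symm⟩
  have noA2B2 : ∀ u' ∈ A \ A1, ∀ w' ∈ B \ B1, ¬ G.Adj u' w' := by
    intro u' hu' w' hw' huw
    obtain ⟨a0, ha0⟩ := hA1ne
    obtain ⟨wk⟩ := hconn.preconnected u' a0
    have hQwalk : ∀ {x y : V} (w : G.Walk x y),
        ((x ∈ A \ A1 ∧ ∀ b ∈ B1, ¬ G.Adj x b) ∨ (x ∈ B \ B1 ∧ ∀ a ∈ A1, ¬ G.Adj x a)) →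
        ((y ∈ A \ A1 ∧ ∀ b ∈ B1, ¬ G.Adj y b) ∨ (y ∈ B \ B1 ∧ ∀ a ∈ A1, ¬ G.Adj y a)) := by
      intro x y w
      induction w with
      | nil => exact id
      | cons h pp ih => exact fun hx => ih (hclose _ _ h hx)
    have hQa0 := hQwalk wk (Or.inl ⟨hu', key1 u' w' hu' hw' huw⟩)
    rcases hQa0 with ⟨h, _⟩ | ⟨h, _⟩
    · exact (Finset.mem_sdiff.mp h).2 ha0
    · exact Finset.disjoint_left.mp hAB (hA1A ha0) (Finset.mem_sdiff.mp h).1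
  -- neighborhoods land in the biclique
  have nbrU : ∀ x ∈ A \ A1, G.neighborFinset x ⊆ B1 := by
    intro x hx y hy
    rw [SimpleGraph.mem_neighborFinset] at hy
    have hyB : y ∈ B := nbrB (Finset.mem_sdiff.mp hx).1 ((SimpleGraph.mem_neighborFinset _ _ _).mpr hy)
    by_contra hyB1
    exact noA2B2 x hx y (Finset.mem_sdiff.mpr ⟨hyB, hyB1⟩) hy
  have nbrV : ∀ x ∈ B \ B1, G.neighborFinset x ⊆ A1 := by
    intro x hx y hy
    rw [SimpleGraph.mem_neighborFinset] at hy
    have hyA : y ∈ A := nbrA (Finset.mem_sdiff.mp hx).1 ((SimpleGraph.mem_neighborFinset _ _ _).mpr hy)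
    by_contra hyA1
    exact noA2B2 y (Finset.mem_sdiff.mpr ⟨hyA, hyA1⟩) x hx hy.symm
  -- nested neighborhoods
  have nestedU : ∀ i j : Fin p, i ≤ j → G.neighborFinset (u i) ⊆ G.neighborFinset (u j) := by
    intro i j hij
    rcases eq_or_lt_of_le hij with rfl | hlt
    · exact Finset.Subset.refl _
    have hcomp : G.neighborFinset (u i) ⊆ G.neighborFinset (u j) ∨
        G.neighborFinset (u j) ⊆ G.neighborFinset (u i) := by
      by_contra hcon
      push_neg at hcon
      obtain ⟨hni, hnj⟩ := hcon
      obtain ⟨x, hxi, hxj⟩ := Finset.not_subset.mp hni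
      obtain ⟨y, hyj, hyi⟩ := Finset.not_subset.mp hnj
      obtain ⟨a0, ha0⟩ := hA1ne
      have hxB1 : x ∈ B1 := nbrU _ (huA i) hxi
      have hyB1 : y ∈ B1 := nbrU _ (huA j) hyj
      rw [SimpleGraph.mem_neighborFinset] at hxi hxj hyj hyi
      have hiA : u i ∈ A := (Finset.mem_sdiff.mp (huA i)).1
      have hjA : u j ∈ A := (Finset.mem_sdiff.mp (huA j)).1
      have hinA1 : u i ∉ A1 := (Finset.mem_sdiff.mp (huA i)).2
      have hjnA1 : u j ∉ A1 := (Finset.mem_sdiff.mp (huA j)).2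
      have ha0A := hA1A ha0
      have hxB := hB1B hxB1
      have hyB := hB1B hyB1
      exact p5_helper hp5 (u i) x a0 y (u j)
        (neAB hiA hxB) (fun h => hinA1 (h ▸ ha0)) (neAB hiA hyB)
        (fun h => absurd (hu h) hlt.ne) (neAB ha0A hxB).symm (fun h => hyi (h ▸ hxi))
        (neAB hjA hxB).symm (neAB ha0A hyB) (fun h => hjnA1 (h.symm ▸ ha0))
        (neAB hjA hyB).symm
        hxi (hbic a0 ha0 x hxB1).symm (hbic a0 ha0 y hyB1) hyj.symm
        (noadjA hiA ha0A) hyi (noadjA hiA hjA)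
        (noadjB hxB hyB) (fun h => hxj h.symm) (noadjA ha0A hjA)
    rcases hcomp with h | h
    · exact h
    · have hdm := humono i j hij
      rw [← SimpleGraph.card_neighborFinset_eq_degree,
        ← SimpleGraph.card_neighborFinset_eq_degree] at hdm
      exact Finset.subset_of_eq (Finset.eq_of_subset_of_card_le h hdm).symm
  have nestedV : ∀ i j : Fin q, i ≤ j → G.neighborFinset (v i) ⊆ G.neighborFinset (v j) := by
    intro i j hij
    rcases eq_or_lt_of_le hij with rfl | hlt
    · exact Finset.Subset.refl _
    have hcomp : G.neighborFinset (v i) ⊆ G.neighborFinset (v j) ∨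
        G.neighborFinset (v j) ⊆ G.neighborFinset (v i) := by
      by_contra hcon
      push_neg at hcon
      obtain ⟨hni, hnj⟩ := hcon
      obtain ⟨x, hxi, hxj⟩ := Finset.not_subset.mp hni
      obtain ⟨y, hyj, hyi⟩ := Finset.not_subset.mp hnj
      obtain ⟨b0, hb0⟩ := hB1ne
      have hxA1 : x ∈ A1 := nbrV _ (hvB i) hxi
      have hyA1 : y ∈ A1 := nbrV _ (hvB j) hyj
      rw [SimpleGraph.mem_neighborFinset] at hxi hxj hyj hyi
      have hiB : v i ∈ B := (Finset.mem_sdiff.mp (hvB i)).1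
      have hjB : v j ∈ B := (Finset.mem_sdiff.mp (hvB j)).1
      have hinB1 : v i ∉ B1 := (Finset.mem_sdiff.mp (hvB i)).2
      have hjnB1 : v j ∉ B1 := (Finset.mem_sdiff.mp (hvB j)).2
      have hb0B := hB1B hb0
      have hxA := hA1A hxA1
      have hyA := hA1A hyA1
      exact p5_helper hp5 (v i) x b0 y (v j)
        (neAB hxA hiB).symm (fun h => hinB1 (h ▸ hb0)) (neAB hyA hiB).symm
        (fun h => absurd (hv h) hlt.ne) (neAB hxA hb0B) (fun h => hyi (h ▸ hxi))
        (neAB hxA hjB) (neAB hyA hb0B).symm (fun h => hjnB1 (h.symm ▸ hb0))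
        (neAB hyA hjB)
        hxi (hbic x hxA1 b0 hb0) (hbic y hyA1 b0 hb0).symm hyj.symm
        (noadjB hiB hb0B) hyi (noadjB hiB hjB)
        (noadjA hxA hyA) (fun h => hxj h.symm) (noadjB hb0B hjB)
    rcases hcomp with h | h
    · exact h
    · have hdm := hvmono i j hij
      rw [← SimpleGraph.card_neighborFinset_eq_degree,
        ← SimpleGraph.card_neighborFinset_eq_degree] at hdm
      exact Finset.subset_of_eq (Finset.eq_of_subset_of_card_le h hdm).symm
  -- cardinality bounds
  have htp : p ≤ B1.card := by
    rcases Nat.eq_zero_or_pos p with h0 | h0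
    · omega
    · have hi := hdu ⟨p - 1, by omega⟩
      have hle : (G.neighborFinset (u ⟨p - 1, by omega⟩)).card ≤ B1.card :=
        Finset.card_le_card (nbrU _ (huA _))
      rw [SimpleGraph.card_neighborFinset_eq_degree] at hle
      simp only at hi
      omega
  have hsq : q + 1 ≤ A1.card := by omega
  -- ordered enumerations of B1 and A1
  obtain ⟨LB, hLBnd, hLBfin, hLBidx⟩ := ord p B1 (fun i => G.neighborFinset (u i))
    (fun i => nbrU _ (huA i)) nestedU
    (fun i => by rw [SimpleGraph.card_neighborFinset_eq_degree]; exact hdu i)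
  have hLAex : ∃ LA : List V, LA.Nodup ∧ LA.toFinset = A1 ∧
      ∀ (h : ℕ) (hh : h < q), ∃ (h1 : h < LA.length) (h2 : h + 1 < LA.length),
        LA[h] ∈ G.neighborFinset (v ⟨h, hh⟩) ∧ LA[h+1] ∈ G.neighborFinset (v ⟨h, hh⟩) := by
    rcases Nat.eq_zero_or_pos q with hq0 | hqpos
    · obtain ⟨LA, h1, h2, _⟩ := ord 0 A1 (fun _ => (∅ : Finset V))
        (fun _ => Finset.empty_subset _) (fun _ _ _ => Finset.Subset.refl _)
        (fun i => absurd i.isLt (by omega))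
      exact ⟨LA, h1, h2, fun h hh => absurd hh (by omega)⟩
    · obtain ⟨LA, h1, h2, h3⟩ := ord (q+1) A1
        (fun i => G.neighborFinset (v ⟨(i : ℕ) - 1, by omega⟩))
        (fun i => nbrV _ (hvB _))
        (fun i j hij => nestedV _ _ (by
          simp only [Fin.mk_le_mk]
          have := Fin.le_def.mp hij
          omega))
        (fun i => by
          rw [SimpleGraph.card_neighborFinset_eq_degree]
          have := hdv ⟨(i : ℕ) - 1, by omega⟩
          simp only at this
          omega)
      refine ⟨LA, h1, h2, ?_⟩
      intro h hh
      obtain ⟨k1, m1⟩ := h3 h (by omega)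
      obtain ⟨k2, m2⟩ := h3 (h+1) (by omega)
      refine ⟨k1, k2, ?_, ?_⟩
      · exact nestedV ⟨h - 1, by omega⟩ ⟨h, hh⟩ (by simp only [Fin.mk_le_mk]; omega) m1
      · have : ((⟨h + 1, by omega⟩ : Fin (q+1)) : ℕ) - 1 = h := by simp
        exact nestedV ⟨h + 1 - 1, by omega⟩ ⟨h, hh⟩ (by simp only [Fin.mk_le_mk]; omega) m2
  obtain ⟨LA, hLAnd, hLAfin, hLAidx⟩ := hLAex
  have hLBlen : LB.length = B1.card := by
    rw [← hLBfin, List.toFinset_card_of_nodup hLBnd]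
  have hLAlen : LA.length = A1.card := by
    rw [← hLAfin, List.toFinset_card_of_nodup hLAnd]
  have hLAmem : ∀ (j : ℕ) (hj : j < LA.length), LA[j] ∈ A1 := by
    intro j hj
    rw [← hLAfin]
    exact List.mem_toFinset.mpr (LA.getElem_mem hj)
  have hLBmem : ∀ (j : ℕ) (hj : j < LB.length), LB[j] ∈ B1 := by
    intro j hj
    rw [← hLBfin]
    exact List.mem_toFinset.mpr (LB.getElem_mem hj)
  -- the two halves of the Hamiltonian path
  set XS : List V := (List.finRange p).map u ++ LA.reverse with hXS
  set YS : List V := LB ++ ((List.finRange q).map v).reverse with hYS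
  have hXlen : XS.length = p + A1.card := by
    rw [hXS]; simp [hLAlen]
  have hYlen : YS.length = B1.card + q := by
    rw [hYS]; simp [hLBlen]
  have hXSu : ∀ (i : ℕ) (h : i < p) (hb : i < XS.length), XS[i] = u ⟨i, h⟩ := by
    intro i h hb
    show (List.map u (List.finRange p) ++ LA.reverse)[i]'(hb) = _
    rw [List.getElem_append_left (by simpa using h)]
    simp
  have hXSa : ∀ (i j : ℕ) (hb : i < XS.length) (hj : j < LA.length),
      p ≤ i → i - p = LA.length - 1 - j → XS[i] = LA[j] := by
    intro i j hb hj hpi hrel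
    show (List.map u (List.finRange p) ++ LA.reverse)[i]'(hb) = _
    rw [List.getElem_append_right (by simpa using hpi)]
    rw [List.getElem_reverse]
    have hb' : i < p + A1.card := by rw [← hXlen]; exact hb
    apply getElem_idx_congr
    simp only [List.length_map, List.length_finRange]
    omega
  have hYSb : ∀ (i : ℕ) (h : i < B1.card) (hb : i < YS.length), YS[i] = LB[i]'(by omega) := by
    intro i h hb
    show (LB ++ (List.map v (List.finRange q)).reverse)[i]'(hb) = _
    rw [List.getElem_append_left (by omega)]
  have hYSv : ∀ (i h' : ℕ) (hb : i < YS.length) (hh : h' < q),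
      B1.card ≤ i → i - B1.card = q - 1 - h' → YS[i] = v ⟨h', hh⟩ := by
    intro i h' hb hh hti hrel
    show (LB ++ (List.map v (List.finRange q)).reverse)[i]'(hb) = _
    rw [List.getElem_append_right (by omega)]
    rw [List.getElem_reverse]
    rw [List.getElem_map]
    congr 1
    apply Fin.ext
    have hb' : i < B1.card + q := by rw [← hYlen]; exact hb
    simp only [List.getElem_finRange, List.length_map, List.length_finRange, Fin.coe_cast,
      Fin.val_mk]
    omega
  -- the chain conditions
  have cond1 : ∀ (i : ℕ) (h1 : i < XS.length) (h2 : i < YS.length), G.Adj XS[i] YS[i] := by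
    intro i h1 h2
    have h1' : i < p + A1.card := by omega
    have h2' : i < B1.card + q := by omega
    rcases lt_or_ge i p with hip | hip
    · rw [hXSu i hip h1, hYSb i (by omega) h2]
      obtain ⟨hb, hmemN⟩ := hLBidx i hip
      exact (SimpleGraph.mem_neighborFinset _ _ _).mp hmemN
    · rcases lt_or_ge i B1.card with hit | hit
      · rw [hXSa i (LA.length - 1 - (i - p)) h1 (by omega) hip (by omega),
          hYSb i hit h2]
        exact hbic _ (hLAmem _ _) _ (hLBmem _ (by omega))
      · have hq0 : 0 < q := by omega
        set h' := q - 1 - (i - B1.card) with hh'def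
        have hhq : h' < q := by omega
        rw [hYSv i h' h2 hhq hit (by omega),
          hXSa i (h' + 1) h1 (by omega) hip (by omega)]
        obtain ⟨k1, k2, m1, m2⟩ := hLAidx h' hhq
        exact ((SimpleGraph.mem_neighborFinset _ _ _).mp m2).symm
  have cond2 : ∀ (i : ℕ) (h2 : i < YS.length) (h1 : i + 1 < XS.length),
      G.Adj YS[i] XS[i+1] := by
    intro i h2 h1
    have h1' : i + 1 < p + A1.card := by omega
    have h2' : i < B1.card + q := by omega
    rcases lt_or_ge i p with hip | hip
    · rw [hYSb i (by omega) h2]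
      rcases lt_or_ge (i+1) p with hip1 | hip1
      · rw [hXSu (i+1) hip1 h1]
        obtain ⟨hb, hmemN⟩ := hLBidx i hip
        have hsub := nestedU ⟨i, hip⟩ ⟨i+1, hip1⟩ (by simp [Fin.le_def])
        exact ((SimpleGraph.mem_neighborFinset _ _ _).mp (hsub hmemN)).symm
      · rw [hXSa (i+1) (LA.length - 1) h1 (by omega) hip1 (by omega)]
        exact (hbic _ (hLAmem _ _) _ (hLBmem _ (by omega))).symm
    · rcases lt_or_ge i B1.card with hit | hit
      · rw [hYSb i hit h2,
          hXSa (i+1) (LA.length - 1 - (i + 1 - p)) h1 (by omega) (by omega) (by omega)]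
        exact (hbic _ (hLAmem _ _) _ (hLBmem _ (by omega))).symm
      · have hq0 : 0 < q := by omega
        set h' := q - 1 - (i - B1.card) with hh'def
        have hhq : h' < q := by omega
        rw [hYSv i h' h2 hhq hit (by omega),
          hXSa (i+1) h' h1 (by omega) (by omega) (by omega)]
        obtain ⟨k1, k2, m1, m2⟩ := hLAidx h' hhq
        exact (SimpleGraph.mem_neighborFinset _ _ _).mp m1
  have hchain : (ilv XS YS).Chain' G.Adj :=
    chain'_ilv G.Adj XS YS (Or.inr (by omega)) cond1 cond2
  -- no duplicates
  have hmemXS : ∀ x ∈ XS, x ∈ A := by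
    intro x hx
    rw [hXS, List.mem_append] at hx
    rcases hx with hx | hx
    · simp only [List.mem_map, List.mem_finRange, true_and] at hx
      obtain ⟨i, rfl⟩ := hx
      exact (Finset.mem_sdiff.mp (huA i)).1
    · rw [List.mem_reverse] at hx
      exact hA1A (by rw [← hLAfin]; exact List.mem_toFinset.mpr hx)
  have hmemYS : ∀ x ∈ YS, x ∈ B := by
    intro x hx
    rw [hYS, List.mem_append] at hx
    rcases hx with hx | hx
    · exact hB1B (by rw [← hLBfin]; exact List.mem_toFinset.mpr hx)
    · rw [List.mem_reverse] at hx
      simp only [List.mem_map, List.mem_finRange, true_and] at hx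
      obtain ⟨i, rfl⟩ := hx
      exact (Finset.mem_sdiff.mp (hvB i)).1
  have hndXS : XS.Nodup := by
    rw [hXS]
    apply List.Nodup.append
    · exact (List.nodup_finRange p).map hu
    · exact List.nodup_reverse.mpr hLAnd
    · intro x hx1 hx2
      simp only [List.mem_map, List.mem_finRange, true_and] at hx1
      obtain ⟨i, rfl⟩ := hx1
      rw [List.mem_reverse] at hx2
      exact (Finset.mem_sdiff.mp (huA i)).2 (by rw [← hLAfin]; exact List.mem_toFinset.mpr hx2)
  have hndYS : YS.Nodup := by
    rw [hYS]
    apply List.Nodup.append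
    · exact hLBnd
    · exact List.nodup_reverse.mpr ((List.nodup_finRange q).map hv)
    · intro x hx1 hx2
      rw [List.mem_reverse] at hx2
      simp only [List.mem_map, List.mem_finRange, true_and] at hx2
      obtain ⟨i, rfl⟩ := hx2
      exact (Finset.mem_sdiff.mp (hvB i)).2 (by rw [← hLBfin]; exact List.mem_toFinset.mpr hx1)
  have hnd : (ilv XS YS).Nodup := by
    rw [(ilv_perm XS YS).nodup_iff]
    apply List.Nodup.append hndXS hndYS
    intro x hx1 hx2
    exact Finset.disjoint_left.mp hAB (hmemXS x hx1) (hmemYS x hx2)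
  -- coverage
  have hcov : ∀ x : V, x ∈ ilv XS YS := by
    intro x
    rw [(ilv_perm XS YS).mem_iff, List.mem_append]
    rcases hmem x with hx | hx
    · left
      rw [hXS, List.mem_append]
      by_cases hx1 : x ∈ A1
      · right
        rw [List.mem_reverse, ← List.mem_toFinset, hLAfin]
        exact hx1
      · left
        obtain ⟨i, rfl⟩ := huAll x (Finset.mem_sdiff.mpr ⟨hx, hx1⟩)
        simp
    · right
      rw [hYS, List.mem_append]
      by_cases hx1 : x ∈ B1
      · left
        rw [← List.mem_toFinset, hLBfin]
        exact hx1
      · right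
        rw [List.mem_reverse]
        obtain ⟨i, rfl⟩ := hvAll x (Finset.mem_sdiff.mpr ⟨hx, hx1⟩)
        simp
  obtain ⟨x0⟩ := hconn.nonempty
  obtain ⟨a, b, w, hw⟩ := walk_of_chain _ (List.ne_nil_of_mem (hcov x0)) hchain
  refine ⟨a, b, w, ?_⟩
  intro x
  rw [hw]
  exact List.count_eq_one_of_mem hnd (hcov x)
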